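/- arXiv:2211.08892 — 2 statements merged into one kernel-verified Lean document; each statement's English description precedes it below -/
import Mathlib

section
/- Let (Ω, F, P) be a probability space, n a positive natural number, and U an n×n real matrix. For each t ∈ [0,1], let B_t : Ω → ℝⁿ be a random vector whose components are square-integrable and satisfy E[B_t[h]] = 0 for all h, and E[B_s[h]·B_t[h']] = min(s,t) if h = h' and E[B_s[h]·B_t[h']] = 0 if h ≠ h', for all s, t ∈ [0,1] (the covariance structure of n independent standard Brownian motions). Define the matrix-valued process M_t := U · diag(B_t) · Uᵀ, i.e. M_t[i,j] = Σ_{h=1}^n U[i,h]·B_t[h]·U[j,h]. Then for all t ∈ [0,1] and all indices i, j one has E[M_t[i,j]] = 0, and for all s, t ∈ [0,1] and all indices i, j, k, l one has E[M_s[i,j]·M_t[k,l]] = min(s,t) · K(U)_{i,j,k,l}. -/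
open MeasureTheory

lemma entry_formula {n : ℕ} (U : Matrix (Fin n) (Fin n) ℝ) (b : Fin n → ℝ)
    (i j : Fin n) :
    (U * Matrix.diagonal b * U.transpose) i j = ∑ h : Fin n, U i h * b h * U j h := by
  simp only [Matrix.mul_apply, Matrix.diagonal_apply, Matrix.transpose_apply, mul_ite,
    mul_zero, ite_mul, zero_mul, Finset.sum_ite_eq, Finset.sum_ite_eq', Finset.mem_univ, if_true]

/-- The covariance-kernel computation at the core of Proposition 1:
the spectral noise process `M_t = U · diag(B_t) · Uᵀ` is centered with covariance
`min(s,t) · K(U)`. -/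
theorem spectral_noise_mean_and_covariance
    {Ω : Type*} [MeasurableSpace Ω] (P : Measure Ω) [IsProbabilityMeasure P]
    (n : ℕ) (hn : 0 < n) (U : Matrix (Fin n) (Fin n) ℝ)
    (B : ℝ → Ω → Fin n → ℝ)
    (hL2 : ∀ t ∈ Set.Icc (0:ℝ) 1, ∀ h : Fin n, MemLp (fun ω => B t ω h) 2 P)
    (hmean : ∀ t ∈ Set.Icc (0:ℝ) 1, ∀ h : Fin n, ∫ ω, B t ω h ∂P = 0)
    (hcov : ∀ s ∈ Set.Icc (0:ℝ) 1, ∀ t ∈ Set.Icc (0:ℝ) 1, ∀ h h' : Fin n,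
      ∫ ω, B s ω h * B t ω h' ∂P = if h = h' then min s t else 0)
    (M : ℝ → Ω → Matrix (Fin n) (Fin n) ℝ)
    (hM : ∀ t ω, M t ω = U * Matrix.diagonal (B t ω) * U.transpose) :
    (∀ t ∈ Set.Icc (0:ℝ) 1, ∀ i j : Fin n, ∫ ω, M t ω i j ∂P = 0) ∧
    (∀ s ∈ Set.Icc (0:ℝ) 1, ∀ t ∈ Set.Icc (0:ℝ) 1, ∀ i j k l : Fin n,
      ∫ ω, M s ω i j * M t ω k l ∂P =
        min s t * ∑ h : Fin n, U i h * U j h * U k h * U l h) := by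
  have hInt : ∀ t ∈ Set.Icc (0:ℝ) 1, ∀ h : Fin n,
      Integrable (fun ω => B t ω h) P := fun t ht h =>
    (hL2 t ht h).integrable (by norm_num)
  have hIntMul : ∀ s ∈ Set.Icc (0:ℝ) 1, ∀ t ∈ Set.Icc (0:ℝ) 1, ∀ h h' : Fin n,
      Integrable (fun ω => B s ω h * B t ω h') P := fun s hs t ht h h' =>
    memLp_one_iff_integrable.mp
      ((hL2 t ht h').smul (hL2 s hs h) (p := 2) (q := 2) (r := 1))
  constructor
  · intro t ht i j
    have : (fun ω => M t ω i j)
        = fun ω => ∑ h : Fin n, U i h * B t ω h * U j h := by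
      funext ω; rw [hM, entry_formula]
    rw [this, integral_finset_sum]
    · refine Finset.sum_eq_zero fun h _ => ?_
      have : (fun ω => U i h * B t ω h * U j h)
          = fun ω => (U i h * U j h) * B t ω h := by funext ω; ring
      rw [this, integral_const_mul, hmean t ht h, mul_zero]
    · intro h _
      have : (fun ω => U i h * B t ω h * U j h)
          = fun ω => (U i h * U j h) * B t ω h := by funext ω; ring
      rw [this]
      exact (hInt t ht h).const_mul _
  · intro s hs t ht i j k l
    have key : (fun ω => M s ω i j * M t ω k l)
        = fun ω => ∑ h : Fin n, ∑ h' : Fin n,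
            (U i h * U j h * (U k h' * U l h')) * (B s ω h * B t ω h') := by
      funext ω
      rw [hM, hM, entry_formula, entry_formula, Finset.sum_mul_sum]
      refine Finset.sum_congr rfl fun h _ => Finset.sum_congr rfl fun h' _ => by ring
    rw [key, integral_finset_sum]
    · have : ∀ h ∈ Finset.univ, (∫ ω, ∑ h' : Fin n,
          (U i h * U j h * (U k h' * U l h')) * (B s ω h * B t ω h') ∂P)
          = ∑ h' : Fin n, (U i h * U j h * (U k h' * U l h')) *
              (if h = h' then min s t else 0) := by
        intro h _
        rw [integral_finset_sum]
        · exact Finset.sum_congr rfl fun h' _ => by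
            rw [integral_const_mul, hcov s hs t ht h h']
        · intro h' _
          exact (hIntMul s hs t ht h h').const_mul _
      rw [Finset.sum_congr rfl this]
      rw [Finset.mul_sum]
      refine Finset.sum_congr rfl fun h _ => ?_
      rw [Finset.sum_eq_single h]
      · simp; ring
      · intro c _ hc; simp [Ne.symm hc]
      · simp
    · intro h _
      exact integrable_finset_sum _ fun h' _ =>
        (hIntMul s hs t ht h h').const_mul _
end

section
/- Let p, m, N be positive natural numbers with N ≥ 1, let s : ℝᵖ → ℝᵐ (Euclidean spaces with the standard inner product), let y ∈ ℝᵐ, let θ ∈ ℝᵖ, and suppose s has Fréchet derivative J at θ (HasFDerivAt s J θ, where J : ℝᵖ → ℝᵐ is a continuous linear map). Define the score-matching loss f : ℝᵖ → ℝ by f(θ') = (1/N)·‖s(θ') − y‖². Let λ > 0 and assume the tangent kernel lower bound: for every v ∈ ℝᵐ, ‖J* v‖² ≥ λ·‖v‖², where J* denotes the adjoint of J. Then f is differentiable at θ with gradient ∇f(θ) = (2/N)·J*(s(θ) − y), and the Polyak–Łojasiewicz inequality ‖∇f(θ)‖² ≥ (λ/N)·f(θ) holds. -/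
/-- A lower bound on the least eigenvalue of the tangent kernel implies the
Polyak–Łojasiewicz inequality for the score-matching loss `f(θ') = (1/N)‖s(θ') − y‖²`. -/
theorem tangent_kernel_implies_PL
    (p m N : ℕ) (hp : 0 < p) (hm : 0 < m) (hN : 1 ≤ N)
    (s : EuclideanSpace ℝ (Fin p) → EuclideanSpace ℝ (Fin m))
    (y : EuclideanSpace ℝ (Fin m)) (θ : EuclideanSpace ℝ (Fin p))
    (J : EuclideanSpace ℝ (Fin p) →L[ℝ] EuclideanSpace ℝ (Fin m))
    (hJ : HasFDerivAt s J θ)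
    (f : EuclideanSpace ℝ (Fin p) → ℝ)
    (hf : ∀ θ', f θ' = (1 / (N : ℝ)) * ‖s θ' - y‖^2)
    (lam : ℝ) (hlam : 0 < lam)
    (hker : ∀ v : EuclideanSpace ℝ (Fin m),
      lam * ‖v‖^2 ≤ ‖(ContinuousLinearMap.adjoint J) v‖^2) :
    HasGradientAt f ((2 / (N : ℝ)) • (ContinuousLinearMap.adjoint J) (s θ - y)) θ ∧
    (lam / (N : ℝ)) * f θ ≤ ‖(2 / (N : ℝ)) • (ContinuousLinearMap.adjoint J) (s θ - y)‖^2 := by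
  have hNpos : (0 : ℝ) < N := by exact_mod_cast Nat.lt_of_lt_of_le Nat.zero_lt_one hN
  have hN1 : (1 : ℝ) ≤ N := by exact_mod_cast hN
  set v := s θ - y with hv
  constructor
  · -- gradient
    have hg : HasFDerivAt (fun θ' => s θ' - y) J θ := hJ.sub_const y
    have h1 : HasFDerivAt (fun θ' => ‖s θ' - y‖ ^ 2)
        (2 • (innerSL ℝ (s θ - y)).comp J) θ := hg.norm_sq
    have h2 : HasFDerivAt f ((1 / (N : ℝ)) • (2 • (innerSL ℝ (s θ - y)).comp J)) θ := by
      have := h1.const_mul (1 / (N : ℝ))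
      have hfe : f = fun θ' => (1 / (N : ℝ)) * ‖s θ' - y‖ ^ 2 := funext hf
      rw [hfe]
      exact this
    rw [hasGradientAt_iff_hasFDerivAt]
    refine h2.congr_fderiv ?_
    ext x
    simp only [InnerProductSpace.toDual_apply_apply, ContinuousLinearMap.smul_apply,
      ContinuousLinearMap.comp_apply, innerSL_apply_apply, real_inner_smul_left,
      ContinuousLinearMap.adjoint_inner_left, smul_eq_mul]
    ring
  · -- PL inequality
    have hnorm : ‖(2 / (N : ℝ)) • (ContinuousLinearMap.adjoint J) v‖ ^ 2
        = (2 / (N : ℝ)) ^ 2 * ‖(ContinuousLinearMap.adjoint J) v‖ ^ 2 := by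
      rw [norm_smul]
      simp [mul_pow, abs_of_pos (by positivity : (0:ℝ) < 2 / (N:ℝ))]
    rw [hf θ, hnorm]
    have hk := hker v
    have h4 : (0:ℝ) < (N:ℝ)^2 := by positivity
    rw [div_pow]
    have hv2 : (0:ℝ) ≤ ‖v‖^2 := by positivity
    have : lam / (N : ℝ) * (1 / (N : ℝ) * ‖v‖ ^ 2) = (lam * ‖v‖^2) / (N:ℝ)^2 := by
      rw [sq]; field_simp
    rw [this]
    have h22 : (lam * ‖v‖^2) ≤ 2^2 * ‖(ContinuousLinearMap.adjoint J) v‖^2 := by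
      nlinarith [hk]
    calc lam * ‖v‖^2 / (N:ℝ)^2 ≤ 2^2 * ‖(ContinuousLinearMap.adjoint J) v‖^2 / (N:ℝ)^2 := by
          gcongr
      _ = 2^2 / (N:ℝ)^2 * ‖(ContinuousLinearMap.adjoint J) v‖^2 := by ring
end
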